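/- Let m̄ be a nonzero complex semisimple Lie algebra that is a direct sum of simple ideals mᵢ, equipped with a symmetric nondegenerate invariant bilinear form whose restriction to each mᵢ is a positive multiple of the Killing form of mᵢ. If σ is an involution of m̄ that does not preserve any simple ideal mᵢ (an f-involution), then the fixed point subalgebra m̄^σ is not isotropic with respect to this form. -/

import Mathlib

section Aux

variable {R : Type*} {L : Type*} [CommRing R] [LieRing L] [LieAlgebra R L]

/-- The equivalence between two ideals induced by an automorphism mapping one to the other. -/
def lieEquivOfMemIff (σ : L ≃ₗ⁅R⁆ L) (P Q : LieIdeal R L)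
    (h : ∀ x : L, x ∈ P ↔ σ x ∈ Q) : ↥P ≃ₗ⁅R⁆ ↥Q where
  toFun x := ⟨σ x, (h x).mp x.2⟩
  map_add' x y := Subtype.ext (by exact map_add σ.toLinearEquiv (x : L) (y : L))
  map_smul' c x := Subtype.ext (by exact map_smul σ.toLinearEquiv c (x : L))
  map_lie' {x y} := Subtype.ext (by
    show σ ⁅(x : L), (y : L)⁆ = ⁅σ (x : L), σ (y : L)⁆
    exact σ.map_lie _ _)
  invFun y := ⟨σ.symm y, by rw [h, LieEquiv.apply_symm_apply]; exact y.2⟩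
  left_inv x := Subtype.ext (by exact σ.symm_apply_apply x)
  right_inv y := Subtype.ext (by exact σ.apply_symm_apply y)

@[simp] lemma lieEquivOfMemIff_apply (σ : L ≃ₗ⁅R⁆ L) (P Q : LieIdeal R L)
    (h : ∀ x : L, x ∈ P ↔ σ x ∈ Q) (x : ↥P) :
    (lieEquivOfMemIff σ P Q h x : L) = σ x := rfl

lemma idealBracketCoe (P : LieIdeal R L) (z a : ↥P) :
    ((⁅z, a⁆ : ↥P) : L) = ⁅(z : L), (a : L)⁆ := rfl

end Aux

/-- Let `m̄` be a nonzero complex semisimple Lie algebra that is a direct sum of simple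
ideals `mᵢ`, equipped with a symmetric nondegenerate invariant bilinear form whose
restriction to each `mᵢ` is a positive (real) multiple of the Killing form of `mᵢ`.
If `σ` is an involution of `m̄` that does not preserve any simple ideal `mᵢ` (an
`f`-involution), then the fixed point subalgebra `m̄^σ` is not isotropic with respect to
this form. -/
theorem stmt15 {L : Type*} [LieRing L] [LieAlgebra ℂ L] [Module.Finite ℂ L] [Nontrivial L]
    {ι : Type*} [DecidableEq ι] (I : ι → LieIdeal ℂ L)
    (hsimple : ∀ i, LieAlgebra.IsSimple ℂ ↥(I i))
    (hdec : DirectSum.IsInternal fun i => ((I i : Submodule ℂ L)))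
    (B : LinearMap.BilinForm ℂ L)
    (hsym : ∀ x y : L, B x y = B y x)
    (hnd : B.Nondegenerate)
    (hinv : ∀ x y z : L, B ⁅x, y⁆ z = B x ⁅y, z⁆)
    (hpos : ∀ i, ∃ c : ℝ, 0 < c ∧
      ∀ x y : ↥(I i), B ↑x ↑y = (c : ℂ) * killingForm ℂ ↥(I i) x y)
    (σ : L ≃ₗ⁅ℂ⁆ L) (hinvol : ∀ x, σ (σ x) = x)
    (hf : ∀ i, σ '' ((I i : Submodule ℂ L) : Set L) ≠ ((I i : Submodule ℂ L) : Set L)) :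
    ¬ (∀ x y : L, σ x = x → σ y = y → B x y = 0) := by
  intro hiso
  have hsup : (⨆ i, (I i : Submodule ℂ L)) = ⊤ := hdec.submodule_iSup_eq_top
  have hind := hdec.submodule_iSupIndep
  -- elements in two distinct ideals are zero
  have hdisj : ∀ {i j : ι}, i ≠ j → ∀ x : L, x ∈ I i → x ∈ I j → x = 0 := by
    intro i j hij x hxi hxj
    exact Submodule.disjoint_def.mp (hind.pairwiseDisjoint hij) x hxi hxj
  -- brackets between distinct ideals vanish
  have hbz : ∀ {i j : ι}, i ≠ j → ∀ x ∈ I i, ∀ y ∈ I j, ⁅x, y⁆ = (0 : L) := by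
    intro i j hij x hx y hy
    refine hdisj hij _ ?_ ((I j).lie_mem hy)
    have h1 : ⁅x, y⁆ = -⁅y, x⁆ := by rw [← lie_skew]
    rw [h1]
    exact neg_mem ((I i).lie_mem hx)
  -- distinct ideals are B-orthogonal
  have horth : ∀ {i j : ι}, i ≠ j → ∀ x ∈ I i, ∀ y ∈ I j, B x y = 0 := by
    intro i j hij
    let Q : LieIdeal ℂ ↥(I i) :=
      { carrier := {x : ↥(I i) | ∀ y ∈ I j, B ↑x y = 0}
        add_mem' := by
          intro a b ha hb
          intro y hy
          show B ↑(a + b) y = 0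
          rw [Submodule.coe_add, map_add, LinearMap.add_apply, ha y hy, hb y hy, add_zero]
        zero_mem' := by
          intro y hy
          show B ((0 : ↥(I i)) : L) y = 0
          rw [ZeroMemClass.coe_zero, map_zero, LinearMap.zero_apply]
        smul_mem' := by
          intro c a ha
          intro y hy
          show B ↑(c • a) y = 0
          rw [Submodule.coe_smul, map_smul, LinearMap.smul_apply, ha y hy, smul_zero]
        lie_mem := by
          intro z a _
          intro y hy
          show B ↑⁅z, a⁆ y = 0
          rw [idealBracketCoe, hinv, hbz hij (↑a) a.2 y hy, map_zero] }
    have hall : ∀ z a : ↥(I i), ⁅z, a⁆ ∈ Q := by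
      intro z a
      intro y hy
      show B ↑⁅z, a⁆ y = 0
      rw [idealBracketCoe, hinv, hbz hij (↑a) a.2 y hy, map_zero]
    rcases (hsimple i).eq_bot_or_eq_top Q with hbot | htop
    · exfalso
      refine (hsimple i).non_abelian ⟨fun z a => ?_⟩
      have h2 := hall z a
      rw [hbot] at h2
      exact (LieSubmodule.mem_bot _).mp h2
    · intro x hx y hy
      have h3 : (⟨x, hx⟩ : ↥(I i)) ∈ Q := htop ▸ LieSubmodule.mem_top _
      exact h3 y hy
  -- σ maps each ideal onto a different ideal
  have hmap : ∀ i : ι, ∃ j : ι, j ≠ i ∧ ∀ x : L, x ∈ I i ↔ σ x ∈ I j := by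
    intro i
    set σl : L →ₗ[ℂ] L := (σ : L →ₗ⁅ℂ⁆ L).toLinearMap with hσl
    have hσlx : ∀ x : L, σl x = σ x := fun _ => rfl
    set S : Submodule ℂ L := Submodule.map σl (I i : Submodule ℂ L) with hSdef
    have hSmem : ∀ {z : L}, z ∈ S ↔ ∃ a ∈ I i, σ a = z := by
      intro z
      rw [hSdef, Submodule.mem_map]
      exact ⟨fun ⟨a, ha, he⟩ => ⟨a, ha, he⟩, fun ⟨a, ha, he⟩ => ⟨a, ha, he⟩⟩
    -- S is an ideal of L
    have hSlie : ∀ (w : L) {z : L}, z ∈ S → ⁅w, z⁆ ∈ S := by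
      intro w z hz
      obtain ⟨a, ha, rfl⟩ := hSmem.mp hz
      refine hSmem.mpr ⟨⁅σ.symm w, a⁆, (I i).lie_mem ha, ?_⟩
      rw [LieEquiv.map_lie, LieEquiv.apply_symm_apply]
    by_cases hc : ∀ j : ι, ∀ z : L, z ∈ S → z ∈ I j → z = 0
    · -- then I i is abelian, contradiction
      exfalso
      have hzero : ∀ a ∈ I i, ∀ y : L, ⁅σ a, y⁆ = 0 := by
        intro a ha y
        have hy : y ∈ ⨆ k, (I k : Submodule ℂ L) := hsup ▸ Submodule.mem_top
        refine Submodule.iSup_induction _ (motive := fun y => ⁅σ a, y⁆ = 0) hy ?_ (by simp) ?_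
        · intro k z hz
          refine hc k _ ?_ ((I k).lie_mem hz)
          have h1 : ⁅σ a, z⁆ = -⁅z, σ a⁆ := by rw [← lie_skew]
          rw [h1]
          exact S.neg_mem (hSlie z (hSmem.mpr ⟨a, ha, rfl⟩))
        · intro u v hu hv
          rw [lie_add, hu, hv, add_zero]
      refine (hsimple i).non_abelian ⟨fun a b => ?_⟩
      have h1 : σ ⁅(a : L), (b : L)⁆ = 0 := by
        rw [LieEquiv.map_lie]
        exact hzero a a.2 (σ b)
      have h2 : ⁅(a : L), (b : L)⁆ = 0 := by
        refine σ.injective ?_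
        show σ ⁅(a : L), (b : L)⁆ = σ 0
        rw [h1]
        exact (map_zero σ.toLinearEquiv).symm
      ext
      rw [idealBracketCoe, h2]
      rfl
    · push_neg at hc
      obtain ⟨j, z, hzS, hzj, hz0⟩ := hc
      have hIjS : ∀ y ∈ I j, y ∈ S := by
        let Q1 : LieIdeal ℂ ↥(I j) :=
          { carrier := {x : ↥(I j) | (x : L) ∈ S}
            add_mem' := fun ha hb => S.add_mem ha hb
            zero_mem' := S.zero_mem
            smul_mem' := fun c a ha => S.smul_mem c ha
            lie_mem := by
              intro w x hx
              show ((⁅w, x⁆ : ↥(I j)) : L) ∈ S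
              rw [idealBracketCoe]
              exact hSlie _ hx }
        rcases (hsimple j).eq_bot_or_eq_top Q1 with hbot | htop
        · exfalso
          have h1 : (⟨z, hzj⟩ : ↥(I j)) ∈ Q1 := hzS
          rw [hbot, LieSubmodule.mem_bot] at h1
          exact hz0 (by simpa using congrArg Subtype.val h1)
        · intro y hy
          have h1 : (⟨y, hy⟩ : ↥(I j)) ∈ Q1 := htop ▸ LieSubmodule.mem_top _
          exact h1
      have hSIj : ∀ a ∈ I i, σ a ∈ I j := by
        let Q2 : LieIdeal ℂ ↥(I i) :=
          { carrier := {a : ↥(I i) | σ (a : L) ∈ I j}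
            add_mem' := by
              intro a b ha hb
              show σ ↑(a + b) ∈ I j
              have hadd : σ ((a : L) + (b : L)) = σ (a : L) + σ (b : L) :=
                map_add σ.toLinearEquiv _ _
              rw [Submodule.coe_add, hadd]
              exact (I j).add_mem ha hb
            zero_mem' := by
              show σ ((0 : ↥(I i)) : L) ∈ I j
              have h0 : σ (0 : L) = 0 := map_zero σ.toLinearEquiv
              rw [ZeroMemClass.coe_zero, h0]
              exact (I j).zero_mem
            smul_mem' := by
              intro c a ha
              show σ ↑(c • a) ∈ I j
              have hsm : σ (c • (a : L)) = c • σ (a : L) := map_smul σ.toLinearEquiv _ _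
              rw [Submodule.coe_smul, hsm]
              exact (I j).smul_mem c ha
            lie_mem := by
              intro w a ha
              show σ ((⁅w, a⁆ : ↥(I i)) : L) ∈ I j
              rw [idealBracketCoe, LieEquiv.map_lie]
              exact (I j).lie_mem ha }
        rcases (hsimple i).eq_bot_or_eq_top Q2 with hbot | htop
        · exfalso
          obtain ⟨a, ha, haz⟩ := hSmem.mp hzS
          have hmem : (⟨a, ha⟩ : ↥(I i)) ∈ Q2 := by
            show σ a ∈ I j
            rw [haz]; exact hzj
          rw [hbot, LieSubmodule.mem_bot] at hmem
          have h1 : a = 0 := by simpa using congrArg Subtype.val hmem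
          exact hz0 (by rw [← haz, h1]; exact map_zero σ.toLinearEquiv)
        · intro a ha
          have h1 : (⟨a, ha⟩ : ↥(I i)) ∈ Q2 := htop ▸ LieSubmodule.mem_top _
          exact h1
      have hiff : ∀ x : L, x ∈ I i ↔ σ x ∈ I j := by
        intro x
        constructor
        · exact hSIj x
        · intro hx
          have h1 : σ x ∈ S := hIjS _ hx
          obtain ⟨a, ha, haeq⟩ := hSmem.mp h1
          have h2 : a = x := σ.injective haeq
          rwa [← h2]
      refine ⟨j, ?_, hiff⟩
      intro hji
      subst hji
      apply hf j
      ext w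
      constructor
      · rintro ⟨a, ha, rfl⟩
        exact hSIj a (by simpa using ha)
      · intro hw
        refine ⟨σ.symm w, ?_, by simp⟩
        have h1 : σ (σ.symm w) ∈ I j := by rwa [LieEquiv.apply_symm_apply]
        simpa using (hiff _).mpr h1
  -- pick a nonzero element of some ideal
  have hex : ∃ i : ι, ∃ x : L, x ∈ I i ∧ x ≠ 0 := by
    by_contra h
    push_neg at h
    obtain ⟨x, hx0⟩ := exists_ne (0 : L)
    apply hx0
    have hx : x ∈ ⨆ k, (I k : Submodule ℂ L) := hsup ▸ Submodule.mem_top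
    refine Submodule.iSup_induction _ (motive := fun y => y = 0) hx ?_ rfl ?_
    · intro k z hz
      by_cases hz0 : z = 0
      · exact hz0
      · exact absurd hz0 (fun h' => h' (h k z hz))
    · intro u v hu hv
      rw [hu, hv, add_zero]
  obtain ⟨i, x, hxI, hx0⟩ := hex
  -- find y in the same ideal with B x y ≠ 0
  have hy : ∃ y : L, y ∈ I i ∧ B x y ≠ 0 := by
    by_contra h
    push_neg at h
    apply hx0
    apply hnd.1 x
    intro z
    have hz : z ∈ ⨆ k, (I k : Submodule ℂ L) := hsup ▸ Submodule.mem_top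
    refine Submodule.iSup_induction _ (motive := fun z => B x z = 0) hz ?_ (by simp) ?_
    · intro k w hw
      by_cases hk : k = i
      · subst hk; exact h w hw
      · exact horth (Ne.symm hk) x hxI w hw
    · intro u v hu hv
      rw [map_add, hu, hv, add_zero]
  obtain ⟨y, hyI, hBxy⟩ := hy
  obtain ⟨j, hji, hiff⟩ := hmap i
  have hσx : σ x ∈ I j := (hiff x).mp hxI
  have hσy : σ y ∈ I j := (hiff y).mp hyI
  -- the induced equivalence and Killing form invariance
  let e := lieEquivOfMemIff σ (I i) (I j) hiff
  have hkill : killingForm ℂ ↥(I j) ⟨σ x, hσx⟩ ⟨σ y, hσy⟩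
      = killingForm ℂ ↥(I i) ⟨x, hxI⟩ ⟨y, hyI⟩ := by
    have h1 : e ⟨x, hxI⟩ = ⟨σ x, hσx⟩ := rfl
    have h2 : e ⟨y, hyI⟩ = ⟨σ y, hσy⟩ := rfl
    rw [← h1, ← h2]
    exact LieAlgebra.killingForm_of_equiv_apply e ⟨x, hxI⟩ ⟨y, hyI⟩
  obtain ⟨ci, hci, hBi⟩ := hpos i
  obtain ⟨cj, hcj, hBj⟩ := hpos j
  set k : ℂ := killingForm ℂ ↥(I i) ⟨x, hxI⟩ ⟨y, hyI⟩ with hk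
  have hBxyk : B x y = (ci : ℂ) * k := hBi ⟨x, hxI⟩ ⟨y, hyI⟩
  have hBσ : B (σ x) (σ y) = (cj : ℂ) * k := by
    rw [hBj ⟨σ x, hσx⟩ ⟨σ y, hσy⟩, hkill]
  have hk0 : k ≠ 0 := by
    intro h
    rw [h, mul_zero] at hBxyk
    exact hBxy hBxyk
  -- the fixed vectors
  have hσadd : ∀ a b : L, σ (a + b) = σ a + σ b := fun a b => map_add σ.toLinearEquiv a b
  have hu : σ (x + σ x) = x + σ x := by
    rw [hσadd, hinvol, add_comm]
  have hv : σ (y + σ y) = y + σ y := by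
    rw [hσadd, hinvol, add_comm]
  have hfinal := hiso (x + σ x) (y + σ y) hu hv
  simp only [map_add, LinearMap.add_apply] at hfinal
  rw [horth hji.symm x hxI (σ y) hσy, horth hji (σ x) hσx y hyI] at hfinal
  rw [hBxyk, hBσ] at hfinal
  have : ((ci : ℂ) + (cj : ℂ)) * k = 0 := by ring_nf; ring_nf at hfinal; linear_combination hfinal
  rcases mul_eq_zero.mp this with h | h
  · have : (ci + cj : ℝ) = 0 := by exact_mod_cast h
    linarith
  · exact hk0 h
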